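/- Let ρ ∈ (1/2,1), μ₀ ∈ (0,1), π ∈ (0,1), c > 0, γ := c/(1-π), and μ₂(∅) := ρμ₀+(1-ρ)(1-μ₀). Then -c(2-μ₀) + 1 - ρ(1-μ₀) > -c(1-πμ₀) + π[1 - ρ(1-μ₀)] + (1-π)μ₂(∅) if and only if γ < γ̄' := μ₀(1-ρ)/(1 - μ₀(1-π)). -/
import Mathlib

theorem stmt_11 (ρ μ₀ π c : ℝ) (hρ1 : 1/2 < ρ) (hρ2 : ρ < 1)
    (hμ1 : 0 < μ₀) (hμ2 : μ₀ < 1) (hπ1 : 0 < π) (hπ2 : π < 1) (hc : 0 < c) :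
    -c*(2-μ₀) + 1 - ρ*(1-μ₀) >
      -c*(1-π*μ₀) + π*(1 - ρ*(1-μ₀)) + (1-π)*(ρ*μ₀ + (1-ρ)*(1-μ₀)) ↔
    c/(1-π) < μ₀*(1-ρ)/(1 - μ₀*(1-π)) := by
  have h1 : (0:ℝ) < 1 - π := by linarith
  have h2 : (0:ℝ) < 1 - μ₀*(1-π) := by nlinarith
  rw [div_lt_div_iff₀ h1 h2]
  constructor <;> intro h <;> nlinarith
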